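/- Let n be a positive integer, p ∈ (0,1] and λ > 0. Let N, V₁, V₂, … be mutually independent random variables, where N has the Binomial(n, p) distribution and each Vᵢ has the exponential distribution with rate λ, and set S := ∑_{i=1}^{N} Vᵢ (with S := 0 on {N = 0}). Then for every real θ ≥ 0: (i) if θ ≤ np/λ then ℙ(S ≤ θ) ≤ exp(−(√(np) − √(θλ))²); and (ii) if θ ≥ np/λ then ℙ(S ≥ θ) ≤ exp(−(√(θλ) − √(np))²). -/

import Mathlib

open MeasureTheory ProbabilityTheory

section AuxiliaryLemmas

open Real Set
open scoped ENNReal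

lemma tail_compl_aux {Ω : Type*} [MeasureSpace Ω] [IsProbabilityMeasure (ℙ : Measure Ω)]
    {W : Ω → ℝ} (hW : Measurable W) {c : ℝ} {r : ℝ} (hr0 : 0 ≤ r)
    (h : ℙ {ω | c < W ω} = ENNReal.ofReal r) :
    ℙ {ω | W ω ≤ c} = ENNReal.ofReal (1 - r) := by
  have hc : {ω | W ω ≤ c} = {ω | c < W ω}ᶜ := by ext ω; simp [not_lt]
  rw [hc, measure_compl (show MeasurableSet {ω | c < W ω} from hW measurableSet_Ioi)
    (measure_ne_top _ _), h, measure_univ, ENNReal.ofReal_sub _ hr0, ENNReal.ofReal_one]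

lemma exp_mgf_aux {Ω : Type*} [MeasureSpace Ω] [IsProbabilityMeasure (ℙ : Measure Ω)]
    {lam : ℝ} (hlam : 0 < lam) {W : Ω → ℝ} (hW : Measurable W)
    (htail : ∀ t : ℝ, 0 ≤ t → ℙ {ω | t < W ω} = ENNReal.ofReal (Real.exp (-lam * t)))
    {t : ℝ} (ht : t < lam) :
    ∫⁻ ω, ENNReal.ofReal (Real.exp (t * W ω)) ∂ℙ = ENNReal.ofReal (lam / (lam - t)) := by
  have hb : (0:ℝ) < lam - t := by linarith
  -- identify the law
  have hmap : Measure.map W ℙ = (volume : Measure ℝ).withDensity (exponentialPDF lam) := by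
    have h1 : IsProbabilityMeasure (Measure.map W ℙ) := Measure.isProbabilityMeasure_map hW.aemeasurable
    refine MeasureTheory.Measure.ext_of_Iic _ _ (fun a => ?_)
    rw [Measure.map_apply hW measurableSet_Iic,
      withDensity_apply _ measurableSet_Iic, lintegral_exponentialPDF_eq_antiDeriv hlam]
    have hpre : W ⁻¹' Iic a = {ω | W ω ≤ a} := rfl
    rcases le_or_gt 0 a with ha | ha
    · rw [hpre, tail_compl_aux hW (exp_nonneg _) (htail a ha), if_pos ha, neg_mul]
    · rw [if_neg (not_le.2 ha), ENNReal.ofReal_zero, hpre]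
      have h2 : ℙ {ω | W ω ≤ 0} = 0 := by
        rw [tail_compl_aux hW (exp_nonneg _) (htail 0 le_rfl)]
        simp
      exact le_antisymm (le_trans (measure_mono
        (show {ω | W ω ≤ a} ⊆ {ω | W ω ≤ 0} from fun ω hω => le_trans hω ha.le)) h2.le) zero_le
  -- compute the integral against the density
  have hpdf : Measurable (exponentialPDF lam) :=
    (measurable_exponentialPDFReal lam).ennreal_ofReal
  have hfm : Measurable (fun x : ℝ => ENNReal.ofReal (Real.exp (t * x))) :=
    ((measurable_id.const_mul t).exp).ennreal_ofReal
  have step1 : ∫⁻ ω, ENNReal.ofReal (Real.exp (t * W ω)) ∂ℙ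
      = ∫⁻ x, ENNReal.ofReal (Real.exp (t * x)) ∂(Measure.map W ℙ) :=
    (lintegral_map hfm hW).symm
  rw [step1, hmap, lintegral_withDensity_eq_lintegral_mul _ hpdf hfm]
  have hpt : (fun x => exponentialPDF lam x * ENNReal.ofReal (Real.exp (t * x)))
      = (Ici (0:ℝ)).indicator (fun x => ENNReal.ofReal (lam * Real.exp ((t - lam) * x))) := by
    funext x
    rcases le_or_gt 0 x with hx | hx
    · rw [Set.indicator_of_mem (show x ∈ Ici (0:ℝ) from hx), exponentialPDF_of_nonneg hx,
        ← ENNReal.ofReal_mul (by positivity)]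
      congr 1
      rw [mul_assoc, ← Real.exp_add]
      ring_nf
    · rw [Set.indicator_of_notMem (by simpa using hx), exponentialPDF_of_neg hx, zero_mul]
  have step2 : ∫⁻ x, (exponentialPDF lam * fun x => ENNReal.ofReal (Real.exp (t * x))) x
      = ∫⁻ x in Ioi (0:ℝ), ENNReal.ofReal (lam * Real.exp ((t - lam) * x)) := by
    simp only [Pi.mul_apply]
    rw [show (fun x => exponentialPDF lam x * ENNReal.ofReal (Real.exp (t * x)))
      = (Ici (0:ℝ)).indicator (fun x => ENNReal.ofReal (lam * Real.exp ((t - lam) * x))) from hpt]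
    rw [lintegral_indicator measurableSet_Ici]
    exact (setLIntegral_congr (Ioi_ae_eq_Ici)).symm
  rw [step2]
  have hint : IntegrableOn (fun x => lam * Real.exp ((t - lam) * x)) (Ioi (0:ℝ)) := by
    have := (exp_neg_integrableOn_Ioi 0 hb).const_mul lam
    simpa [IntegrableOn, show ∀ x:ℝ, -(lam - t) * x = (t - lam) * x from fun x => by ring] using this
  rw [← ofReal_integral_eq_lintegral_ofReal hint (ae_of_all _ (fun x => by positivity))]
  congr 1
  rw [integral_const_mul]
  have key : ∫ x in Ioi (0:ℝ), Real.exp ((t - lam) * x) = 1 / (lam - t) := by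
    have hderiv : ∀ x ∈ Ioi (0:ℝ),
        HasDerivAt (fun x => -Real.exp ((t - lam) * x) / (lam - t)) (Real.exp ((t - lam) * x)) x := by
      intro x _
      have h1 : HasDerivAt (fun y : ℝ => (t - lam) * y) (t - lam) x := by
        simpa using (hasDerivAt_id x).const_mul (t - lam)
      have h2 := (h1.exp.neg).div_const (lam - t)
      exact h2.congr_deriv (by rw [div_eq_iff hb.ne']; ring)
    have htend : Filter.Tendsto (fun x => -Real.exp ((t - lam) * x) / (lam - t))
        Filter.atTop (nhds 0) := by
      have h1 : Filter.Tendsto (fun x : ℝ => (lam - t) * x) Filter.atTop Filter.atTop :=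
        Filter.Tendsto.const_mul_atTop hb Filter.tendsto_id
      have h2 := tendsto_exp_neg_atTop_nhds_zero.comp h1
      have h3 : (fun x : ℝ => Real.exp ((t - lam) * x))
          = (fun x => Real.exp (-x)) ∘ (fun x : ℝ => (lam - t) * x) := by
        funext x; simp [Function.comp]; ring_nf
      have h4 := ((h3 ▸ h2).neg).div_const (lam - t)
      simpa using h4
    have hint2 : IntegrableOn (fun x => Real.exp ((t - lam) * x)) (Ioi (0:ℝ)) := by
      have := exp_neg_integrableOn_Ioi 0 hb
      simpa [show ∀ x:ℝ, -(lam - t) * x = (t - lam) * x from fun x => by ring] using this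
    have := integral_Ioi_of_hasDerivAt_of_tendsto (Continuous.continuousWithinAt (by continuity)) hderiv hint2 htend
    rw [this]
    simp
    field_simp
  rw [key]
  rw [mul_one_div]

lemma factor_aux {Ω : Type*} [MeasureSpace Ω] [IsProbabilityMeasure (ℙ : Measure Ω)]
    {N : Ω → ℕ} {V : ℕ → Ω → ℝ}
    (hNmeas : Measurable N) (hVmeas : ∀ i, Measurable (V i))
    (hIndep : iIndepFun
      (fun o : Option ℕ => o.elim (fun ω => (N ω : ℝ)) V) ℙ)
    (t : ℝ) (r : ℝ≥0∞) (hmg : ∀ i, ∫⁻ ω, ENNReal.ofReal (Real.exp (t * V i ω)) ∂ℙ = r)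
    (m : ℕ) :
    ∀ k, ∫⁻ ω, ({ω | N ω = m}.indicator (fun _ => (1:ℝ≥0∞)) ω)
        * ∏ i ∈ Finset.range k, ENNReal.ofReal (Real.exp (t * V i ω)) ∂ℙ
      = ℙ {ω | N ω = m} * r ^ k := by
  have hmsA : MeasurableSet {ω | N ω = m} := hNmeas (measurableSet_singleton m)
  have hFmeas : ∀ o : Option ℕ,
      Measurable ((fun o : Option ℕ => o.elim (fun ω => (N ω : ℝ)) V) o) := by
    rintro (_ | i)
    · exact measurable_from_top.comp hNmeas
    · exact hVmeas i
  intro k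
  induction k with
  | zero =>
    simp only [Finset.range_zero, Finset.prod_empty, mul_one, pow_zero]
    exact lintegral_indicator_one hmsA
  | succ k ih =>
    set F : Option ℕ → Ω → ℝ := fun o : Option ℕ => o.elim (fun ω => (N ω : ℝ)) V with hF
    set Sfin : Finset (Option ℕ) := insert none ((Finset.range k).image some) with hSfin
    set Tfin : Finset (Option ℕ) := {some k} with hTfin
    have hdisj : Disjoint Sfin Tfin := by
      rw [Finset.disjoint_right]
      intro o ho
      rw [Finset.mem_singleton] at ho
      subst ho
      simp [hSfin]
    have hIF := hIndep.indepFun_finset Sfin Tfin hdisj hFmeas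
    set φ : ({x // x ∈ Sfin} → ℝ) → ℝ≥0∞ := fun v =>
      ({x : ℝ | x = (m:ℝ)}.indicator (fun _ => (1:ℝ≥0∞))
        (v ⟨none, Finset.mem_insert_self _ _⟩))
      * ∏ i ∈ (Finset.range k).attach, ENNReal.ofReal (Real.exp (t *
          v ⟨some i.1, Finset.mem_insert_of_mem (Finset.mem_image_of_mem some i.2)⟩)) with hφ
    set ψ : ({x // x ∈ Tfin} → ℝ) → ℝ≥0∞ := fun v =>
      ENNReal.ofReal (Real.exp (t * v ⟨some k, Finset.mem_singleton_self _⟩)) with hψ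
    have hφm : Measurable φ := by
      refine Measurable.mul ?_ ?_
      · exact (measurable_one.indicator (measurableSet_singleton ((m:ℝ)))).comp
          (measurable_pi_apply _)
      · exact Finset.measurable_prod _
          (fun i _ => Measurable.ennreal_ofReal (by fun_prop))
    have hψm : Measurable ψ :=
      Measurable.ennreal_ofReal (by fun_prop)
    have hIF2 := hIF.comp hφm hψm
    have heq1 : (φ ∘ fun a (i : {x // x ∈ Sfin}) => F i a)
        = fun ω => ({ω' | N ω' = m}.indicator (fun _ => (1:ℝ≥0∞)) ω)
          * ∏ i ∈ Finset.range k, ENNReal.ofReal (Real.exp (t * V i ω)) := by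
      funext ω
      simp only [Function.comp_apply, hφ]
      congr 1
      · simp [Set.indicator_apply, hF, Nat.cast_inj]
      · rw [← Finset.prod_attach (Finset.range k)
          (fun i => ENNReal.ofReal (Real.exp (t * V i ω)))]
        rfl
    have heq2 : (ψ ∘ fun a (i : {x // x ∈ Tfin}) => F i a)
        = fun ω => ENNReal.ofReal (Real.exp (t * V k ω)) := by
      funext ω; rfl
    rw [heq1, heq2] at hIF2
    have hG : Measurable (fun ω => ({ω' | N ω' = m}.indicator (fun _ => (1:ℝ≥0∞)) ω)
        * ∏ i ∈ Finset.range k, ENNReal.ofReal (Real.exp (t * V i ω))) :=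
      (measurable_one.indicator hmsA).mul
        (Finset.measurable_prod _ (fun i _ => (((hVmeas i).const_mul t).exp).ennreal_ofReal))
    have hfk : Measurable (fun ω => ENNReal.ofReal (Real.exp (t * V k ω))) :=
      (((hVmeas k).const_mul t).exp).ennreal_ofReal
    calc ∫⁻ ω, ({ω' | N ω' = m}.indicator (fun _ => (1:ℝ≥0∞)) ω)
          * ∏ i ∈ Finset.range (k+1), ENNReal.ofReal (Real.exp (t * V i ω)) ∂ℙ
        = ∫⁻ ω, (({ω' | N ω' = m}.indicator (fun _ => (1:ℝ≥0∞)) ω)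
            * ∏ i ∈ Finset.range k, ENNReal.ofReal (Real.exp (t * V i ω)))
          * ENNReal.ofReal (Real.exp (t * V k ω)) ∂ℙ := by
          apply lintegral_congr; intro ω
          rw [Finset.prod_range_succ, mul_assoc]
      _ = (∫⁻ ω, ({ω' | N ω' = m}.indicator (fun _ => (1:ℝ≥0∞)) ω)
            * ∏ i ∈ Finset.range k, ENNReal.ofReal (Real.exp (t * V i ω)) ∂ℙ)
          * ∫⁻ ω, ENNReal.ofReal (Real.exp (t * V k ω)) ∂ℙ :=
          lintegral_mul_eq_lintegral_mul_lintegral_of_indepFun'' hG.aemeasurable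
            hfk.aemeasurable hIF2
      _ = ℙ {ω | N ω = m} * r ^ (k+1) := by
          rw [ih, hmg k, pow_succ, mul_assoc]

lemma mgf_S_aux {Ω : Type*} [MeasureSpace Ω] [IsProbabilityMeasure (ℙ : Measure Ω)]
    (n : ℕ) {p lam : ℝ} (hp : p ∈ Set.Ioc (0 : ℝ) 1) (hlam : 0 < lam)
    {N : Ω → ℕ} {V : ℕ → Ω → ℝ}
    (hNmeas : Measurable N) (hVmeas : ∀ i, Measurable (V i))
    (hIndep : iIndepFun
      (fun o : Option ℕ => o.elim (fun ω => (N ω : ℝ)) V) ℙ)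
    (hN : ∀ m : ℕ, ℙ {ω | N ω = m}
      = ENNReal.ofReal ((n.choose m : ℝ) * p ^ m * (1 - p) ^ (n - m)))
    (hV : ∀ i, ∀ t : ℝ, 0 ≤ t →
      ℙ {ω | t < V i ω} = ENNReal.ofReal (Real.exp (-lam * t)))
    {S : Ω → ℝ} (hS : ∀ ω, S ω = ∑ i ∈ Finset.range (N ω), V i ω)
    {t : ℝ} (ht : t < lam) :
    ∫⁻ ω, ENNReal.ofReal (Real.exp (t * S ω)) ∂ℙ
      = ENNReal.ofReal ((1 - p + p * (lam / (lam - t))) ^ n) := by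
  have hb : (0:ℝ) < lam - t := by linarith
  have h1p : (0:ℝ) ≤ 1 - p := by linarith [hp.2]
  have hp0 : (0:ℝ) ≤ p := hp.1.le
  set rr : ℝ := lam / (lam - t) with hrr
  have hrr0 : 0 ≤ rr := by positivity
  have hmg : ∀ i, ∫⁻ ω, ENNReal.ofReal (Real.exp (t * V i ω)) ∂ℙ = ENNReal.ofReal rr :=
    fun i => exp_mgf_aux hlam (hVmeas i) (hV i) ht
  have hms : ∀ m : ℕ, MeasurableSet {ω | N ω = m} :=
    fun m => hNmeas (measurableSet_singleton m)
  have hU : (⋃ m : ℕ, {ω | N ω = m}) = univ := by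
    ext ω; simp
  have hdisj : Pairwise (Function.onFun Disjoint (fun m => {ω | N ω = m})) := by
    intro a b hab
    exact Set.disjoint_left.mpr (fun ω h1 h2 => hab (h1.symm.trans h2))
  calc ∫⁻ ω, ENNReal.ofReal (Real.exp (t * S ω)) ∂ℙ
      = ∫⁻ ω in ⋃ m : ℕ, {ω | N ω = m}, ENNReal.ofReal (Real.exp (t * S ω)) ∂ℙ := by
        rw [hU, setLIntegral_univ]
    _ = ∑' m : ℕ, ∫⁻ ω in {ω | N ω = m}, ENNReal.ofReal (Real.exp (t * S ω)) ∂ℙ :=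
        lintegral_iUnion hms hdisj _
    _ = ∑' m : ℕ, ℙ {ω | N ω = m} * (ENNReal.ofReal rr) ^ m := by
        refine tsum_congr (fun m => ?_)
        rw [setLIntegral_congr_fun (hms m)
          (fun ω (hω : N ω = m) => show  ENNReal.ofReal (Real.exp (t * S ω))
            = ∏ i ∈ Finset.range m, ENNReal.ofReal (Real.exp (t * V i ω)) by
          rw [hS ω, hω, Finset.mul_sum, Real.exp_sum,
            ENNReal.ofReal_prod_of_nonneg (fun i _ => exp_nonneg _)])]
        rw [← lintegral_indicator (hms m)]
        rw [show (fun ω => ({ω' | N ω' = m}.indicator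
            (fun ω => ∏ i ∈ Finset.range m, ENNReal.ofReal (Real.exp (t * V i ω))) ω))
          = fun ω => ({ω' | N ω' = m}.indicator (fun _ => (1:ℝ≥0∞)) ω)
            * ∏ i ∈ Finset.range m, ENNReal.ofReal (Real.exp (t * V i ω)) from
          funext (fun ω => by
            by_cases hω : ω ∈ {ω' | N ω' = m}
            · rw [Set.indicator_of_mem hω, Set.indicator_of_mem hω, one_mul]
            · rw [Set.indicator_of_notMem hω, Set.indicator_of_notMem hω, zero_mul])]
        exact factor_aux hNmeas hVmeas hIndep t _ hmg m m
    _ = ∑ m ∈ Finset.range (n+1), ℙ {ω | N ω = m} * (ENNReal.ofReal rr) ^ m := by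
        refine tsum_eq_sum (fun m hm => ?_)
        rw [Finset.mem_range, not_lt] at hm
        rw [hN m, Nat.choose_eq_zero_of_lt hm]
        simp
    _ = ENNReal.ofReal ((1 - p + p * rr) ^ n) := by
        have hterm : ∀ m ∈ Finset.range (n+1), ℙ {ω | N ω = m} * (ENNReal.ofReal rr) ^ m
            = ENNReal.ofReal ((p * rr) ^ m * (1 - p) ^ (n - m) * (n.choose m : ℝ)) := by
          intro m _
          rw [hN m, ← ENNReal.ofReal_pow hrr0, ← ENNReal.ofReal_mul (by positivity)]
          congr 1
          ring
        rw [Finset.sum_congr rfl hterm, ← ENNReal.ofReal_sum_of_nonneg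
          (fun m _ => by positivity)]
        rw [← add_pow]
        congr 1
        ring

lemma chern_aux {Ω : Type*} [MeasureSpace Ω] [IsProbabilityMeasure (ℙ : Measure Ω)]
    (n : ℕ) {p lam : ℝ} (hp : p ∈ Set.Ioc (0 : ℝ) 1) (hlam : 0 < lam)
    {N : Ω → ℕ} {V : ℕ → Ω → ℝ}
    (hNmeas : Measurable N) (hVmeas : ∀ i, Measurable (V i))
    (hIndep : iIndepFun
      (fun o : Option ℕ => o.elim (fun ω => (N ω : ℝ)) V) ℙ)
    (hN : ∀ m : ℕ, ℙ {ω | N ω = m}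
      = ENNReal.ofReal ((n.choose m : ℝ) * p ^ m * (1 - p) ^ (n - m)))
    (hV : ∀ i, ∀ t : ℝ, 0 ≤ t →
      ℙ {ω | t < V i ω} = ENNReal.ofReal (Real.exp (-lam * t)))
    {S : Ω → ℝ} (hS : ∀ ω, S ω = ∑ i ∈ Finset.range (N ω), V i ω)
    {t : ℝ} (ht : t < lam) (c : ℝ) :
    ℙ {ω | c ≤ t * S ω}
      ≤ ENNReal.ofReal (Real.exp (-c) * (1 - p + p * (lam / (lam - t))) ^ n) := by
  have hSmeas : Measurable S := by
    have hg : Measurable (fun q : Ω × ℕ => ∑ i ∈ Finset.range q.2, V i q.1) :=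
      measurable_from_prod_countable_left
        (fun m => Finset.measurable_sum (Finset.range m) (fun i _ => hVmeas i))
    have hSe : S = (fun q : Ω × ℕ => ∑ i ∈ Finset.range q.2, V i q.1)
        ∘ (fun ω => (ω, N ω)) := funext (fun ω => hS ω)
    rw [hSe]; exact hg.comp (measurable_id.prodMk hNmeas)
  have hgm : Measurable (fun ω => ENNReal.ofReal (Real.exp (t * S ω))) :=
    ((hSmeas.const_mul t).exp).ennreal_ofReal
  have hmono : ℙ {ω | c ≤ t * S ω}
      ≤ ℙ {ω | ENNReal.ofReal (Real.exp c) ≤ ENNReal.ofReal (Real.exp (t * S ω))} :=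
    measure_mono (fun ω hω => ENNReal.ofReal_le_ofReal (Real.exp_le_exp.2 hω))
  have hmarkov := mul_meas_ge_le_lintegral₀ (μ := ℙ) hgm.aemeasurable (ENNReal.ofReal (Real.exp c))
  rw [mgf_S_aux n hp hlam hNmeas hVmeas hIndep hN hV hS ht] at hmarkov
  have h2 : ENNReal.ofReal (Real.exp c) * ℙ {ω | c ≤ t * S ω}
      ≤ ENNReal.ofReal ((1 - p + p * (lam / (lam - t))) ^ n) :=
    le_trans (mul_le_mul_right hmono _) hmarkov
  have h3 : ℙ {ω | c ≤ t * S ω}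
      ≤ ENNReal.ofReal ((1 - p + p * (lam / (lam - t))) ^ n) / ENNReal.ofReal (Real.exp c) :=
    (ENNReal.le_div_iff_mul_le (Or.inl ((ENNReal.ofReal_pos.2 (exp_pos c)).ne'))
      (Or.inl ENNReal.ofReal_ne_top)).2 (by rwa [mul_comm] at h2)
  refine le_trans h3 (le_of_eq ?_)
  rw [← ENNReal.ofReal_div_of_pos (exp_pos c)]
  congr 1
  rw [div_eq_mul_inv, ← Real.exp_neg]; ring

lemma core_pow_bound (n : ℕ) {p x : ℝ} (h1 : 0 ≤ 1 + p * x) :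
    (1 + p * x) ^ n ≤ Real.exp ((n : ℝ) * (p * x)) := by
  calc (1 + p * x) ^ n ≤ (Real.exp (p * x)) ^ n :=
        pow_le_pow_left₀ h1 (by have := Real.add_one_le_exp (p * x); linarith) n
    _ = Real.exp ((n : ℝ) * (p * x)) := (Real.exp_nat_mul _ n).symm

end AuxiliaryLemmas

/-- Tail bounds for the Binomial–Exponential compound distribution
`S = ∑_{i=1}^N Vᵢ`, where `N ~ Binomial(n,p)` and the `Vᵢ` are exponential with rate `λ`,
all mutually independent. -/
theorem statement2 {Ω : Type*} [MeasureSpace Ω] [IsProbabilityMeasure (ℙ : Measure Ω)]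
    (n : ℕ) (hn : 0 < n) (p lam : ℝ) (hp : p ∈ Set.Ioc (0 : ℝ) 1) (hlam : 0 < lam)
    (N : Ω → ℕ) (V : ℕ → Ω → ℝ)
    (hNmeas : Measurable N) (hVmeas : ∀ i, Measurable (V i))
    (hIndep : iIndepFun
      (fun o : Option ℕ => o.elim (fun ω => (N ω : ℝ)) V) ℙ)
    (hN : ∀ m : ℕ, ℙ {ω | N ω = m}
      = ENNReal.ofReal ((n.choose m : ℝ) * p ^ m * (1 - p) ^ (n - m)))
    (hV : ∀ i, ∀ t : ℝ, 0 ≤ t →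
      ℙ {ω | t < V i ω} = ENNReal.ofReal (Real.exp (-lam * t)))
    (S : Ω → ℝ) (hS : ∀ ω, S ω = ∑ i ∈ Finset.range (N ω), V i ω)
    (θ : ℝ) (hθ : 0 ≤ θ) :
    (θ ≤ n * p / lam →
      ℙ {ω | S ω ≤ θ}
        ≤ ENNReal.ofReal (Real.exp (-(Real.sqrt (n * p) - Real.sqrt (θ * lam)) ^ 2)))
    ∧ (n * p / lam ≤ θ →
      ℙ {ω | θ ≤ S ω}
        ≤ ENNReal.ofReal (Real.exp (-(Real.sqrt (θ * lam) - Real.sqrt (n * p)) ^ 2))) := by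
  have hp0 : (0:ℝ) < p := hp.1
  have hp1 : p ≤ 1 := hp.2
  have hnp : (0:ℝ) < (n:ℝ) * p := mul_pos (Nat.cast_pos.2 hn) hp0
  set u : ℝ := Real.sqrt ((n:ℝ) * p) with hu
  have hu0 : 0 < u := Real.sqrt_pos.2 hnp
  have hu2 : u ^ 2 = (n:ℝ) * p := Real.sq_sqrt hnp.le
  set b : ℝ := Real.sqrt lam with hbdef
  have hb0 : 0 < b := Real.sqrt_pos.2 hlam
  have hb2 : b ^ 2 = lam := Real.sq_sqrt hlam.le
  constructor
  · -- lower tail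
    intro hle
    rcases eq_or_lt_of_le hθ with h0 | hθpos
    · -- θ = 0
      subst h0
      have hsub : {ω | S ω ≤ 0} ⊆ {ω | N ω = 0} ∪ ⋃ i, {ω | V i ω ≤ 0} := by
        intro ω hω
        by_contra hcon
        simp only [Set.mem_union, Set.mem_iUnion, Set.mem_setOf_eq, not_or, not_exists,
          not_le] at hcon
        obtain ⟨h1, h2⟩ := hcon
        have hpos : 0 < S ω := by
          rw [hS ω]
          exact Finset.sum_pos (fun i _ => h2 i)
            (Finset.nonempty_range_iff.2 (by simpa using h1))
        exact absurd hω (not_le.2 hpos)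
      have hnull : ℙ (⋃ i, {ω | V i ω ≤ 0}) = 0 :=
        measure_iUnion_null (fun i => by
          rw [tail_compl_aux (hVmeas i) (Real.exp_nonneg _) (hV i 0 le_rfl)]
          simp)
      calc ℙ {ω | S ω ≤ 0} ≤ ℙ ({ω | N ω = 0} ∪ ⋃ i, {ω | V i ω ≤ 0}) := measure_mono hsub
        _ ≤ ℙ {ω | N ω = 0} + ℙ (⋃ i, {ω | V i ω ≤ 0}) := measure_union_le _ _
        _ = ℙ {ω | N ω = 0} := by rw [hnull, add_zero]
        _ ≤ ENNReal.ofReal (Real.exp (-(Real.sqrt (↑n * p) - Real.sqrt (0 * lam)) ^ 2)) := by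
            rw [hN 0]
            apply ENNReal.ofReal_le_ofReal
            have h1 : ((n.choose 0 : ℕ) : ℝ) * p ^ 0 * (1 - p) ^ (n - 0) = (1 - p) ^ n := by
              simp
            rw [h1]
            have h2 : Real.sqrt (0 * lam) = 0 := by rw [zero_mul, Real.sqrt_zero]
            rw [h2, sub_zero, ← hu, hu2]
            calc (1 - p) ^ n ≤ (Real.exp (-p)) ^ n :=
                  pow_le_pow_left₀ (by linarith) (by have := Real.add_one_le_exp (-p); linarith) n
              _ = Real.exp ((n:ℝ) * (-p)) := (Real.exp_nat_mul _ n).symm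
              _ = Real.exp (-((n:ℝ) * p)) := by ring_nf
    · -- θ > 0
      have hθl : θ * lam ≤ (n:ℝ) * p := (le_div_iff₀ hlam).1 hle
      set a : ℝ := Real.sqrt θ with hadef
      have ha0 : 0 < a := Real.sqrt_pos.2 hθpos
      have ha2 : a ^ 2 = θ := Real.sq_sqrt hθpos.le
      have hab : a * b = Real.sqrt (θ * lam) := (Real.sqrt_mul hθpos.le lam).symm
      have habu : a * b ≤ u := by
        rw [hab, hu]; exact Real.sqrt_le_sqrt hθl
      set s : ℝ := u * b / a - lam with hsdef
      have hd0 : (0:ℝ) < u * b / a := by positivity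
      have hs0 : 0 ≤ s := by
        rw [hsdef, sub_nonneg, ← hb2, le_div_iff₀ ha0]
        calc b ^ 2 * a = (a * b) * b := by ring
          _ ≤ u * b := mul_le_mul_of_nonneg_right habu hb0.le
      have ht : -s < lam := by linarith
      have hlt : lam - (-s) = u * b / a := by rw [hsdef]; ring
      have hsub : {ω | S ω ≤ θ} ⊆ {ω | (-s) * θ ≤ (-s) * S ω} :=
        fun ω hω => mul_le_mul_of_nonpos_left hω (neg_nonpos.2 hs0)
      refine le_trans (le_trans (measure_mono hsub)
        (chern_aux n hp hlam hNmeas hVmeas hIndep hN hV hS ht ((-s) * θ)))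
        (ENNReal.ofReal_le_ofReal ?_)
      have hne : lam - (-s) ≠ 0 := by rw [hlt]; positivity
      have hrw : 1 - p + p * (lam / (lam - (-s))) = 1 + p * ((-s) / (lam - (-s))) := by
        field_simp
        ring
      have hx : (0:ℝ) ≤ 1 + p * ((-s) / (lam - (-s))) := by
        rw [hlt]
        have h1 : s / (u * b / a) ≤ 1 := (div_le_one hd0).2 (by rw [hsdef]; linarith)
        have h1' : 0 ≤ s / (u * b / a) := div_nonneg hs0 hd0.le
        have h2 : p * (s / (u * b / a)) ≤ 1 := mul_le_one₀ hp1 h1' h1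
        have h3 : (-s) / (u * b / a) = -(s / (u * b / a)) := neg_div _ _
        rw [h3, mul_neg]
        linarith
      calc Real.exp (-((-s) * θ)) * (1 - p + p * (lam / (lam - (-s)))) ^ n
          = Real.exp (-((-s) * θ)) * (1 + p * ((-s) / (lam - (-s)))) ^ n := by rw [hrw]
        _ ≤ Real.exp (-((-s) * θ)) * Real.exp ((n:ℝ) * (p * ((-s) / (lam - (-s))))) :=
            mul_le_mul_of_nonneg_left (core_pow_bound n hx) (Real.exp_pos _).le
        _ = Real.exp (-((-s) * θ) + (n:ℝ) * (p * ((-s) / (lam - (-s))))) := (Real.exp_add _ _).symm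
        _ = Real.exp (-(u - Real.sqrt (θ * lam)) ^ 2) := by
            congr 1
            rw [show (n:ℝ) * (p * ((-s) / (lam - (-s)))) = ((n:ℝ) * p) * ((-s) / (lam - (-s))) by
              ring]
            rw [← hab, hlt, hsdef, ← ha2, ← hb2, ← hu2]
            field_simp
            ring
  · -- upper tail
    intro hge
    have hθpos : 0 < θ := lt_of_lt_of_le (div_pos hnp hlam) hge
    have hθl : (n:ℝ) * p ≤ θ * lam := (div_le_iff₀ hlam).1 hge
    set a : ℝ := Real.sqrt θ with hadef
    have ha0 : 0 < a := Real.sqrt_pos.2 hθpos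
    have ha2 : a ^ 2 = θ := Real.sq_sqrt hθpos.le
    have hab : a * b = Real.sqrt (θ * lam) := (Real.sqrt_mul hθpos.le lam).symm
    have habu : u ≤ a * b := by
      rw [hab, hu]; exact Real.sqrt_le_sqrt hθl
    set s : ℝ := lam - u * b / a with hsdef
    have hd0 : (0:ℝ) < u * b / a := by positivity
    have hs0 : 0 ≤ s := by
      rw [hsdef, sub_nonneg, ← hb2, div_le_iff₀ ha0]
      calc u * b ≤ (a * b) * b := mul_le_mul_of_nonneg_right habu hb0.le
        _ = b ^ 2 * a := by ring
    have ht : s < lam := by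
      rw [hsdef]; linarith
    have hlt : lam - s = u * b / a := by rw [hsdef]; ring
    have hsub : {ω | θ ≤ S ω} ⊆ {ω | s * θ ≤ s * S ω} :=
      fun ω hω => mul_le_mul_of_nonneg_left hω hs0
    refine le_trans (le_trans (measure_mono hsub)
      (chern_aux n hp hlam hNmeas hVmeas hIndep hN hV hS ht (s * θ)))
      (ENNReal.ofReal_le_ofReal ?_)
    have hne : lam - s ≠ 0 := by rw [hlt]; positivity
    have hrw : 1 - p + p * (lam / (lam - s)) = 1 + p * (s / (lam - s)) := by
      field_simp
      ring
    have hx : (0:ℝ) ≤ 1 + p * (s / (lam - s)) := by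
      have h1 : 0 ≤ s / (lam - s) := by rw [hlt]; exact div_nonneg hs0 hd0.le
      nlinarith [mul_nonneg hp0.le h1]
    calc Real.exp (-(s * θ)) * (1 - p + p * (lam / (lam - s))) ^ n
        = Real.exp (-(s * θ)) * (1 + p * (s / (lam - s))) ^ n := by rw [hrw]
      _ ≤ Real.exp (-(s * θ)) * Real.exp ((n:ℝ) * (p * (s / (lam - s)))) :=
          mul_le_mul_of_nonneg_left (core_pow_bound n hx) (Real.exp_pos _).le
      _ = Real.exp (-(s * θ) + (n:ℝ) * (p * (s / (lam - s)))) := (Real.exp_add _ _).symm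
      _ = Real.exp (-(Real.sqrt (θ * lam) - u) ^ 2) := by
          congr 1
          rw [show (n:ℝ) * (p * (s / (lam - s))) = ((n:ℝ) * p) * (s / (lam - s)) by ring]
          rw [← hab, hlt, hsdef, ← ha2, ← hb2, ← hu2]
          field_simp
          ring
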